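/- (Cotlar–Stein Lemma) Let H be a Hilbert space and (T_j)_{j∈N} bounded operators on H. Suppose A := sup_j Σ_k √‖T_j T_k^*‖ < ∞ and B := sup_j Σ_k √‖T_j^* T_k‖ < ∞. Then Σ_j T_j converges in the strong operator topology and ‖Σ_j T_j‖ ≤ √(AB). -/

import Mathlib

open scoped InnerProductSpace

namespace CotlarStein
open Finset Fintype

variable {H : Type*} [NormedAddCommGroup H] [InnerProductSpace ℂ H] [CompleteSpace H]
variable (T : ℕ → H →L[ℂ] H)

noncomputable def cc (j k : ℕ) : ℝ := Real.sqrt ‖T j * star (T k)‖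
noncomputable def dd (j k : ℕ) : ℝ := Real.sqrt ‖star (T j) * T k‖

lemma cc_nonneg (j k : ℕ) : 0 ≤ cc T j k := Real.sqrt_nonneg _
lemma dd_nonneg (j k : ℕ) : 0 ≤ dd T j k := Real.sqrt_nonneg _

lemma cc_symm (j k : ℕ) : cc T j k = cc T k j := by
  unfold cc
  rw [← norm_star (T j * star (T k)), star_mul, star_star]

noncomputable def chain : (m : ℕ) → (Fin m → ℕ × ℕ) → (H →L[ℂ] H)
  | 0, _ => 1
  | (m+1), p => (T (p 0).1 * star (T (p 0).2)) * chain m (Fin.tail p)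

noncomputable def P1 : (m : ℕ) → (Fin m → ℕ × ℕ) → ℝ
  | 0, _ => 1
  | (m+1), p => ‖T (p 0).1 * star (T (p 0).2)‖ * P1 m (Fin.tail p)

noncomputable def DD : (m : ℕ) → ℕ → (Fin m → ℕ × ℕ) → ℝ
  | 0, b, _ => ‖T b‖
  | (m+1), b, p => ‖star (T b) * T (p 0).1‖ * DD m (p 0).2 (Fin.tail p)

noncomputable def VV : (m : ℕ) → ℕ → (Fin m → ℕ × ℕ) → ℝ
  | 0, b, _ => Real.sqrt ‖T b‖
  | (m+1), b, p => dd T b (p 0).1 * (cc T (p 0).1 (p 0).2 * VV m (p 0).2 (Fin.tail p))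

lemma P1_nonneg : ∀ m p, 0 ≤ P1 T m p
  | 0, _ => by simp [P1]
  | (m+1), _ => mul_nonneg (norm_nonneg _) (P1_nonneg m _)

lemma VV_nonneg : ∀ m b p, 0 ≤ VV T m b p
  | 0, _, _ => Real.sqrt_nonneg _
  | (m+1), _, _ => mul_nonneg (Real.sqrt_nonneg _)
      (mul_nonneg (Real.sqrt_nonneg _) (VV_nonneg m _ _))

lemma norm_chain_le_P1 : ∀ m p, ‖chain T m p‖ ≤ P1 T m p := by
  intro m
  induction m with
  | zero =>
    intro p
    simp only [chain, P1]
    simpa [ContinuousLinearMap.one_def] using ContinuousLinearMap.norm_id_le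
  | succ m ih =>
    intro p
    refine (norm_mul_le _ _).trans ?_
    exact mul_le_mul_of_nonneg_left (ih _) (norm_nonneg _)

lemma norm_star_mul_chain_le_DD : ∀ m b p, ‖star (T b) * chain T m p‖ ≤ DD T m b p := by
  intro m
  induction m with
  | zero => intro b p; simp [chain, DD, norm_star]
  | succ m ih =>
    intro b p
    have h : star (T b) * chain T (m+1) p
        = (star (T b) * T (p 0).1) * (star (T (p 0).2) * chain T m (Fin.tail p)) := by
      simp only [chain, mul_assoc]
    rw [h, DD]
    exact (norm_mul_le _ _).trans (mul_le_mul_of_nonneg_left (ih _ _) (norm_nonneg _))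

lemma VV_sq : ∀ m b p, (VV T m b p)^2 = DD T m b p * P1 T m p := by
  intro m
  induction m with
  | zero => intro b p; simp [VV, DD, P1, Real.sq_sqrt (norm_nonneg _)]
  | succ m ih =>
    intro b p
    simp only [VV, DD, P1]
    rw [mul_pow, mul_pow, ih]
    simp only [cc, dd, Real.sq_sqrt (norm_nonneg _)]
    ring

lemma norm_chain_le_W (m : ℕ) (p : Fin (m+1) → ℕ × ℕ) :
    ‖chain T (m+1) p‖
      ≤ Real.sqrt ‖T (p 0).1‖ * (cc T (p 0).1 (p 0).2 * VV T m (p 0).2 (Fin.tail p)) := by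
  set W := Real.sqrt ‖T (p 0).1‖ * (cc T (p 0).1 (p 0).2 * VV T m (p 0).2 (Fin.tail p)) with hW
  have hWnn : 0 ≤ W := mul_nonneg (Real.sqrt_nonneg _)
    (mul_nonneg (Real.sqrt_nonneg _) (VV_nonneg T m _ _))
  have h1 : ‖chain T (m+1) p‖ ≤ P1 T (m+1) p := norm_chain_le_P1 T _ _
  have h2 : ‖chain T (m+1) p‖ ≤ ‖T (p 0).1‖ * DD T m (p 0).2 (Fin.tail p) := by
    have h : chain T (m+1) p = T (p 0).1 * (star (T (p 0).2) * chain T m (Fin.tail p)) := by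
      simp only [chain, mul_assoc]
    rw [h]
    exact (norm_mul_le _ _).trans
      (mul_le_mul_of_nonneg_left (norm_star_mul_chain_le_DD T m _ _) (norm_nonneg _))
  have hWsq : W^2 = P1 T (m+1) p * (‖T (p 0).1‖ * DD T m (p 0).2 (Fin.tail p)) := by
    rw [hW, mul_pow, mul_pow, VV_sq]
    simp only [cc, P1, Real.sq_sqrt (norm_nonneg _)]
    ring
  have hsq : ‖chain T (m+1) p‖^2 ≤ W^2 := by
    rw [hWsq, pow_two]
    exact mul_le_mul h1 h2 (norm_nonneg _) (P1_nonneg T _ _)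
  calc ‖chain T (m+1) p‖ = Real.sqrt (‖chain T (m+1) p‖^2) := (Real.sqrt_sq (norm_nonneg _)).symm
    _ ≤ Real.sqrt (W^2) := Real.sqrt_le_sqrt hsq
    _ = W := Real.sqrt_sq hWnn

lemma cs_sum_piFinset_cons {γ M : Type*} [DecidableEq γ] [AddCommMonoid M] (s : Finset γ) (m : ℕ)
    (g : (Fin (m+1) → γ) → M) :
    ∑ p ∈ Fintype.piFinset (fun _ : Fin (m+1) => s), g p
      = ∑ q ∈ s, ∑ p ∈ Fintype.piFinset (fun _ : Fin m => s), g (Fin.cons q p) := by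
  rw [← Finset.sum_product']
  apply Finset.sum_nbij' (fun r => (r 0, Fin.tail r)) (fun qp => Fin.cons qp.1 qp.2)
  · intro r hr
    simp only [Fintype.mem_piFinset] at hr
    simp only [Finset.mem_product, Fintype.mem_piFinset]
    exact ⟨hr 0, fun i => hr _⟩
  · intro qp hqp
    simp only [Finset.mem_product, Fintype.mem_piFinset] at hqp
    simp only [Fintype.mem_piFinset]
    intro i
    refine Fin.cases ?_ ?_ i
    · simpa using hqp.1
    · intro j; simpa using hqp.2 j
  · intro r _; simp [Fin.cons_self_tail]
  · intro qp _; simp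
  · intro qp _; simp

lemma chain_expand (F : Finset ℕ) :
    ∀ m, ((∑ j ∈ F, T j) * star (∑ j ∈ F, T j))^m
      = ∑ p ∈ Fintype.piFinset (fun _ : Fin m => F ×ˢ F), chain T m p := by
  have hQ : (∑ j ∈ F, T j) * star (∑ j ∈ F, T j)
      = ∑ q ∈ F ×ˢ F, T q.1 * star (T q.2) := by
    rw [star_sum, Finset.sum_mul_sum, ← Finset.sum_product']
  intro m
  induction m with
  | zero => simp [chain]
  | succ m ih =>
    rw [pow_succ', ih, cs_sum_piFinset_cons (F ×ˢ F) m (chain T (m+1)), hQ,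
      Finset.sum_mul]
    refine Finset.sum_congr rfl fun q _ => ?_
    rw [Finset.mul_sum]
    refine Finset.sum_congr rfl fun p _ => ?_
    simp [chain, Fin.tail_cons]

lemma sumVV_le (F : Finset ℕ) (A B : ℝ) (hA0 : 0 ≤ A) (hB0 : 0 ≤ B)
    (hc : ∀ j, ∑ k ∈ F, cc T j k ≤ A) (hd : ∀ j, ∑ k ∈ F, dd T j k ≤ B)
    (hTB : ∀ b, ‖T b‖ ≤ B) :
    ∀ m b, ∑ p ∈ Fintype.piFinset (fun _ : Fin m => F ×ˢ F), VV T m b p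
      ≤ Real.sqrt B * (B * A)^m := by
  intro m
  induction m with
  | zero =>
    intro b
    simp only [pow_zero, mul_one]
    have h0 : (Fintype.piFinset (fun _ : Fin 0 => F ×ˢ F)) = Finset.univ :=
      Fintype.piFinset_of_isEmpty _
    rw [h0, Fintype.sum_unique]
    exact Real.sqrt_le_sqrt (hTB b)
  | succ m ih =>
    intro b
    rw [cs_sum_piFinset_cons]
    have step : ∀ q ∈ F ×ˢ F,
        ∑ p ∈ Fintype.piFinset (fun _ : Fin m => F ×ˢ F), VV T (m+1) b (Fin.cons q p)
          ≤ dd T b q.1 * (cc T q.1 q.2 * (Real.sqrt B * (B*A)^m)) := by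
      intro q hq
      have hcons : ∀ p, VV T (m+1) b (Fin.cons q p)
          = dd T b q.1 * (cc T q.1 q.2 * VV T m q.2 p) := by
        intro p; simp [VV, Fin.tail_cons]
      simp only [hcons, ← Finset.mul_sum]
      exact mul_le_mul_of_nonneg_left (mul_le_mul_of_nonneg_left (ih q.2) (cc_nonneg T _ _))
        (dd_nonneg T _ _)
    calc ∑ q ∈ F ×ˢ F, ∑ p ∈ Fintype.piFinset (fun _ : Fin m => F ×ˢ F),
            VV T (m+1) b (Fin.cons q p)
        ≤ ∑ q ∈ F ×ˢ F, dd T b q.1 * (cc T q.1 q.2 * (Real.sqrt B * (B*A)^m)) :=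
          Finset.sum_le_sum step
      _ = ∑ j ∈ F, dd T b j * ((∑ k ∈ F, cc T j k) * (Real.sqrt B * (B*A)^m)) := by
          rw [Finset.sum_product]
          exact Finset.sum_congr rfl fun j _ => by rw [Finset.sum_mul, Finset.mul_sum]
      _ ≤ ∑ j ∈ F, dd T b j * (A * (Real.sqrt B * (B*A)^m)) := by
          refine Finset.sum_le_sum fun j _ => mul_le_mul_of_nonneg_left ?_ (dd_nonneg T _ _)
          exact mul_le_mul_of_nonneg_right (hc j)
            (mul_nonneg (Real.sqrt_nonneg _) (pow_nonneg (mul_nonneg hB0 hA0) _))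
      _ = (∑ j ∈ F, dd T b j) * (A * (Real.sqrt B * (B*A)^m)) := by rw [Finset.sum_mul]
      _ ≤ B * (A * (Real.sqrt B * (B*A)^m)) := by
          refine mul_le_mul_of_nonneg_right (hd b) ?_
          exact mul_nonneg hA0 (mul_nonneg (Real.sqrt_nonneg _)
            (pow_nonneg (mul_nonneg hB0 hA0) _))
      _ = Real.sqrt B * (B*A)^(m+1) := by ring

lemma norm_Q_pow_le (F : Finset ℕ) (A B : ℝ) (hA0 : 0 ≤ A) (hB0 : 0 ≤ B)
    (hc : ∀ j, ∑ k ∈ F, cc T j k ≤ A) (hd : ∀ j, ∑ k ∈ F, dd T j k ≤ B)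
    (hTA : ∀ b, ‖T b‖ ≤ A) (hTB : ∀ b, ‖T b‖ ≤ B) (m : ℕ) :
    ‖((∑ j ∈ F, T j) * star (∑ j ∈ F, T j))^(m+1)‖
      ≤ (F.card * (Real.sqrt A * (A * (Real.sqrt B * (B*A)^m)))) := by
  rw [chain_expand]
  refine (norm_sum_le _ _).trans ?_
  rw [cs_sum_piFinset_cons (F ×ˢ F) m (fun p => ‖chain T (m+1) p‖)]
  have step : ∀ q ∈ F ×ˢ F,
      ∑ p ∈ Fintype.piFinset (fun _ : Fin m => F ×ˢ F), ‖chain T (m+1) (Fin.cons q p)‖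
        ≤ Real.sqrt A * (cc T q.1 q.2 * (Real.sqrt B * (B*A)^m)) := by
    intro q hq
    have h1 : ∀ p, ‖chain T (m+1) (Fin.cons q p)‖
        ≤ Real.sqrt ‖T q.1‖ * (cc T q.1 q.2 * VV T m q.2 p) := by
      intro p
      have := norm_chain_le_W T m (Fin.cons q p)
      simpa [Fin.tail_cons] using this
    calc ∑ p ∈ Fintype.piFinset (fun _ : Fin m => F ×ˢ F), ‖chain T (m+1) (Fin.cons q p)‖
        ≤ ∑ p ∈ Fintype.piFinset (fun _ : Fin m => F ×ˢ F),
            Real.sqrt ‖T q.1‖ * (cc T q.1 q.2 * VV T m q.2 p) :=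
          Finset.sum_le_sum fun p _ => h1 p
      _ = Real.sqrt ‖T q.1‖ * (cc T q.1 q.2
            * ∑ p ∈ Fintype.piFinset (fun _ : Fin m => F ×ˢ F), VV T m q.2 p) := by
          simp only [← Finset.mul_sum]
      _ ≤ Real.sqrt ‖T q.1‖ * (cc T q.1 q.2 * (Real.sqrt B * (B*A)^m)) := by
          refine mul_le_mul_of_nonneg_left (mul_le_mul_of_nonneg_left ?_ (cc_nonneg T _ _))
            (Real.sqrt_nonneg _)
          exact sumVV_le T F A B hA0 hB0 hc hd hTB m q.2
      _ ≤ Real.sqrt A * (cc T q.1 q.2 * (Real.sqrt B * (B*A)^m)) := by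
          refine mul_le_mul_of_nonneg_right (Real.sqrt_le_sqrt (hTA q.1)) ?_
          exact mul_nonneg (cc_nonneg T _ _) (mul_nonneg (Real.sqrt_nonneg _)
            (pow_nonneg (mul_nonneg hB0 hA0) _))
  calc ∑ q ∈ F ×ˢ F, ∑ p ∈ Fintype.piFinset (fun _ : Fin m => F ×ˢ F),
          ‖chain T (m+1) (Fin.cons q p)‖
      ≤ ∑ q ∈ F ×ˢ F, Real.sqrt A * (cc T q.1 q.2 * (Real.sqrt B * (B*A)^m)) :=
        Finset.sum_le_sum step
    _ = Real.sqrt A * ((∑ q ∈ F ×ˢ F, cc T q.1 q.2) * (Real.sqrt B * (B*A)^m)) := by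
        rw [Finset.sum_mul, Finset.mul_sum]
    _ ≤ Real.sqrt A * ((F.card * A) * (Real.sqrt B * (B*A)^m)) := by
        refine mul_le_mul_of_nonneg_left (mul_le_mul_of_nonneg_right ?_
          (mul_nonneg (Real.sqrt_nonneg _) (pow_nonneg (mul_nonneg hB0 hA0) _)))
          (Real.sqrt_nonneg _)
        rw [Finset.sum_product]
        calc ∑ j ∈ F, ∑ k ∈ F, cc T j k ≤ ∑ j ∈ F, A := Finset.sum_le_sum fun j _ => hc j
          _ = F.card * A := by rw [Finset.sum_const, nsmul_eq_mul]
    _ = F.card * (Real.sqrt A * (A * (Real.sqrt B * (B*A)^m))) := by ring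

lemma pow_two_pow_le {x y C : ℝ} (hx : 0 ≤ x) (hy : 0 < y)
    (h : ∀ n : ℕ, x ^ (2^n) ≤ C * y ^ (2^n)) : x ≤ y := by
  by_contra hlt
  push_neg at hlt
  have hr : 1 < x / y := (one_lt_div hy).2 hlt
  have h2 : ∀ n : ℕ, (x/y)^(2^n) ≤ C := by
    intro n
    rw [div_pow, div_le_iff₀ (pow_pos hy _)]
    exact h n
  have htend : Filter.Tendsto (fun n : ℕ => (x/y)^(2^n)) Filter.atTop Filter.atTop :=
    (tendsto_pow_atTop_atTop_of_one_lt hr).comp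
      (tendsto_pow_atTop_atTop_of_one_lt one_lt_two)
  obtain ⟨n, hn⟩ := (htend.eventually_gt_atTop C).exists
  exact absurd (h2 n) (not_le.2 hn)


lemma key_bound (A B : ℝ)
    (hA : ∀ j, Summable fun k => Real.sqrt ‖(T j).comp (ContinuousLinearMap.adjoint (T k))‖)
    (hA' : ∀ j, (∑' k, Real.sqrt ‖(T j).comp (ContinuousLinearMap.adjoint (T k))‖) ≤ A)
    (hB : ∀ j, Summable fun k => Real.sqrt ‖(ContinuousLinearMap.adjoint (T j)).comp (T k)‖)
    (hB' : ∀ j, (∑' k, Real.sqrt ‖(ContinuousLinearMap.adjoint (T j)).comp (T k)‖) ≤ B)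
    (F : Finset ℕ) :
    ‖∑ j ∈ F, T j‖ ≤ Real.sqrt (A * B) := by
  have hceq : ∀ j, (fun k => Real.sqrt ‖(T j).comp (ContinuousLinearMap.adjoint (T k))‖)
      = cc T j := by
    intro j; funext k
    simp [cc, ContinuousLinearMap.mul_def, ContinuousLinearMap.star_eq_adjoint]
  have hdeq : ∀ j, (fun k => Real.sqrt ‖(ContinuousLinearMap.adjoint (T j)).comp (T k)‖)
      = dd T j := by
    intro j; funext k
    simp [dd, ContinuousLinearMap.mul_def, ContinuousLinearMap.star_eq_adjoint]
  have hccS : ∀ j, Summable (cc T j) := fun j => (hceq j) ▸ hA j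
  have hddS : ∀ j, Summable (dd T j) := fun j => (hdeq j) ▸ hB j
  have hcct : ∀ j, (∑' k, cc T j k) ≤ A := fun j => (hceq j) ▸ hA' j
  have hddt : ∀ j, (∑' k, dd T j k) ≤ B := fun j => (hdeq j) ▸ hB' j
  have hTA : ∀ j, ‖T j‖ ≤ A := by
    intro j
    have h1 : cc T j j = ‖T j‖ := by
      rw [cc, CStarRing.norm_self_mul_star, Real.sqrt_mul_self (norm_nonneg _)]
    have h2 : cc T j j ≤ ∑' k, cc T j k := Summable.le_tsum (hccS j) j fun k _ => cc_nonneg T j k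
    exact h1 ▸ h2.trans (hcct j)
  have hTB : ∀ j, ‖T j‖ ≤ B := by
    intro j
    have h1 : dd T j j = ‖T j‖ := by
      rw [dd, CStarRing.norm_star_mul_self, Real.sqrt_mul_self (norm_nonneg _)]
    have h2 : dd T j j ≤ ∑' k, dd T j k := Summable.le_tsum (hddS j) j fun k _ => dd_nonneg T j k
    exact h1 ▸ h2.trans (hddt j)
  have hA0 : 0 ≤ A := (norm_nonneg _).trans (hTA 0)
  have hB0 : 0 ≤ B := (norm_nonneg _).trans (hTB 0)
  rcases eq_or_lt_of_le hA0 with hAz | hApos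
  · have hT0 : ∀ j, T j = (0 : H →L[ℂ] H) := fun j =>
      norm_le_zero_iff.mp (hAz ▸ hTA j)
    simp only [hT0, Finset.sum_const, smul_zero, norm_zero]
    exact Real.sqrt_nonneg _
  rcases eq_or_lt_of_le hB0 with hBz | hBpos
  · have hT0 : ∀ j, T j = (0 : H →L[ℂ] H) := fun j =>
      norm_le_zero_iff.mp (hBz ▸ hTB j)
    simp only [hT0, Finset.sum_const, smul_zero, norm_zero]
    exact Real.sqrt_nonneg _
  have hc : ∀ j, ∑ k ∈ F, cc T j k ≤ A := fun j =>
    (Summable.sum_le_tsum F (fun k _ => cc_nonneg T j k) (hccS j)).trans (hcct j)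
  have hd : ∀ j, ∑ k ∈ F, dd T j k ≤ B := fun j =>
    (Summable.sum_le_tsum F (fun k _ => dd_nonneg T j k) (hddS j)).trans (hddt j)
  set S := ∑ j ∈ F, T j with hSdef
  have hQsa : IsSelfAdjoint (S * star S) := IsSelfAdjoint.mul_star_self S
  have hpow : ∀ n : ℕ, (‖S‖ * ‖S‖) ^ (2^n) = ‖(S * star S)^(2^n)‖ := by
    intro n
    rw [← CStarRing.norm_self_mul_star]
    have h := congrArg (fun x : NNReal => (x : ℝ)) (hQsa.nnnorm_pow_two_pow n)
    push_cast at h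
    exact h.symm
  have key : ∀ n : ℕ, (‖S‖ * ‖S‖) ^ (2^n)
      ≤ (F.card * (Real.sqrt A * (A * Real.sqrt B)) / (B*A)) * (B*A) ^ (2^n) := by
    intro n
    have hm : (2^n - 1) + 1 = 2^n := Nat.sub_add_cancel (Nat.one_le_two_pow)
    set m := 2^n - 1 with hmdef
    calc (‖S‖ * ‖S‖) ^ (2^n) = ‖(S * star S)^(m+1)‖ := by rw [hpow, hm]
      _ ≤ F.card * (Real.sqrt A * (A * (Real.sqrt B * (B*A)^m))) :=
          norm_Q_pow_le T F A B hA0 hB0 hc hd hTA hTB m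
      _ = (F.card * (Real.sqrt A * (A * Real.sqrt B)) / (B*A)) * (B*A) ^ (m+1) := by
          have hBA : (B*A) ≠ 0 := ne_of_gt (mul_pos hBpos hApos)
          field_simp
          ring
      _ = (F.card * (Real.sqrt A * (A * Real.sqrt B)) / (B*A)) * (B*A) ^ (2^n) := by rw [hm]
  have hSS : ‖S‖ * ‖S‖ ≤ B * A :=
    pow_two_pow_le (mul_nonneg (norm_nonneg _) (norm_nonneg _)) (mul_pos hBpos hApos) key
  calc ‖S‖ = Real.sqrt (‖S‖ * ‖S‖) := (Real.sqrt_mul_self (norm_nonneg _)).symm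
    _ ≤ Real.sqrt (B * A) := Real.sqrt_le_sqrt hSS
    _ = Real.sqrt (A * B) := by rw [mul_comm]


end CotlarStein

/-- **Cotlar–Stein Lemma.** If `(T_j)` are bounded operators on a Hilbert
space with `A = sup_j Σ_k √‖T_j T_k^*‖ < ∞` and `B = sup_j Σ_k √‖T_j^* T_k‖ < ∞`, then
`Σ_j T_j` converges in the strong operator topology and `‖Σ_j T_j‖ ≤ √(AB)`. -/
theorem cotlar_stein
    {H : Type*} [NormedAddCommGroup H] [InnerProductSpace ℂ H] [CompleteSpace H]
    (T : ℕ → H →L[ℂ] H) (A B : ℝ)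
    (hA : ∀ j, Summable fun k => Real.sqrt ‖(T j).comp (ContinuousLinearMap.adjoint (T k))‖)
    (hA' : ∀ j, (∑' k, Real.sqrt ‖(T j).comp (ContinuousLinearMap.adjoint (T k))‖) ≤ A)
    (hB : ∀ j, Summable fun k => Real.sqrt ‖(ContinuousLinearMap.adjoint (T j)).comp (T k)‖)
    (hB' : ∀ j, (∑' k, Real.sqrt ‖(ContinuousLinearMap.adjoint (T j)).comp (T k)‖) ≤ B) :
    ∃ S : H →L[ℂ] H, (∀ u : H, HasSum (fun j => T j u) (S u)) ∧
      ‖S‖ ≤ Real.sqrt (A * B) := by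
  classical
  have hFS : ∀ F : Finset ℕ, ‖∑ j ∈ F, T j‖ ≤ Real.sqrt (A * B) :=
    CotlarStein.key_bound T A B hA hA' hB hB'
  have hceq : ∀ j, (fun k => Real.sqrt ‖(T j).comp (ContinuousLinearMap.adjoint (T k))‖)
      = CotlarStein.cc T j := by
    intro j; funext k
    simp [CotlarStein.cc, ContinuousLinearMap.mul_def, ContinuousLinearMap.star_eq_adjoint]
  have hccS : ∀ j, Summable (CotlarStein.cc T j) := fun j => (hceq j) ▸ hA j
  have hcct : ∀ j, (∑' k, CotlarStein.cc T j k) ≤ A := fun j => (hceq j) ▸ hA' j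
  have hccA : ∀ j k, CotlarStein.cc T j k ≤ A := fun j k =>
    (Summable.le_tsum (hccS j) k fun i _ => CotlarStein.cc_nonneg T j i).trans (hcct j)
  -- Summability on generators
  have hgen : ∀ (k : ℕ) (y : H), Summable fun j => T j (ContinuousLinearMap.adjoint (T k) y) := by
    intro k y
    refine Summable.of_norm ?_
    have hmaj : Summable fun j => A * CotlarStein.cc T k j * ‖y‖ :=
      (((hccS k).mul_left A).mul_right ‖y‖)
    refine Summable.of_nonneg_of_le (fun j => norm_nonneg _) (fun j => ?_) hmaj
    have h1 : T j (ContinuousLinearMap.adjoint (T k) y) = (T j * star (T k)) y := by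
      simp [ContinuousLinearMap.mul_def, ContinuousLinearMap.star_eq_adjoint]
    rw [h1]
    calc ‖(T j * star (T k)) y‖ ≤ ‖T j * star (T k)‖ * ‖y‖ :=
          (T j * star (T k)).le_opNorm y
      _ = CotlarStein.cc T j k * CotlarStein.cc T j k * ‖y‖ := by
          rw [CotlarStein.cc, Real.mul_self_sqrt (norm_nonneg _)]
      _ ≤ A * CotlarStein.cc T k j * ‖y‖ := by
          refine mul_le_mul_of_nonneg_right ?_ (norm_nonneg y)
          rw [← CotlarStein.cc_symm T j k]
          exact mul_le_mul_of_nonneg_right (hccA j k) (CotlarStein.cc_nonneg T j k)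
  set Z : Submodule ℂ H :=
    Submodule.span ℂ (⋃ k, Set.range (ContinuousLinearMap.adjoint (T k))) with hZdef
  have hZsum : ∀ z ∈ Z, Summable fun j => T j z := by
    intro z hz
    induction hz using Submodule.span_induction with
    | mem x hx =>
      obtain ⟨s, hs⟩ := Set.mem_iUnion.mp hx
      obtain ⟨y, rfl⟩ := hs
      exact hgen s y
    | zero => simpa using summable_zero
    | add x y hx hy ihx ihy => simpa [map_add] using ihx.add ihy
    | smul a x hx ihx => simpa [map_smul] using ihx.const_smul a
  -- summability for every u
  have hsum : ∀ u : H, Summable fun j => T j u := by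
    intro u
    set V := Z.topologicalClosure with hVdef
    haveI : CompleteSpace V := (Submodule.isClosed_topologicalClosure Z).completeSpace_coe
    set v : H := (Submodule.orthogonalProjectionOnto V u : H) with hvdef
    have hvV : v ∈ V := (Submodule.orthogonalProjectionOnto V u).2
    have hw : u - v ∈ Vᗮ := Submodule.sub_starProjection_mem_orthogonal (K := V) u
    have hTu : ∀ j, T j u = T j v := by
      intro j
      have hx : ContinuousLinearMap.adjoint (T j) (T j (u - v)) ∈ V :=
        Z.le_topologicalClosure
          (Submodule.subset_span (Set.mem_iUnion.mpr ⟨j, Set.mem_range_self _⟩))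
      have h0 : ⟪T j (u - v), T j (u - v)⟫_ℂ = 0 := by
        rw [← ContinuousLinearMap.adjoint_inner_left]
        exact (Submodule.mem_orthogonal V (u - v)).mp hw _ hx
      have h1 : T j (u - v) = 0 := inner_self_eq_zero.mp h0
      rw [map_sub, sub_eq_zero] at h1
      exact h1
    simp only [hTu]
    rw [summable_iff_vanishing_norm]
    intro ε hε
    have hden : 0 < 2 * (Real.sqrt (A * B) + 1) := by positivity
    have hv_cl : v ∈ closure (Z : Set H) := by
      rw [← Submodule.topologicalClosure_coe]; exact hvV
    obtain ⟨z, hzZ, hzd⟩ := Metric.mem_closure_iff.mp hv_cl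
      (ε / (2 * (Real.sqrt (A * B) + 1))) (by positivity)
    obtain ⟨s, hs⟩ := summable_iff_vanishing_norm.mp (hZsum z hzZ) (ε / 2) (by positivity)
    refine ⟨s, fun t ht => ?_⟩
    have hsplit : ∑ j ∈ t, T j v = (∑ j ∈ t, T j) (v - z) + ∑ j ∈ t, T j z := by
      simp [ContinuousLinearMap.sum_apply, map_sub, Finset.sum_sub_distrib]
    have hterm1 : ‖(∑ j ∈ t, T j) (v - z)‖ ≤ ε / 2 := by
      have h1 : ‖(∑ j ∈ t, T j) (v - z)‖ ≤ Real.sqrt (A * B) * ‖v - z‖ :=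
        ((∑ j ∈ t, T j).le_opNorm (v - z)).trans
          (mul_le_mul_of_nonneg_right (hFS t) (norm_nonneg _))
      have h2 : ‖v - z‖ ≤ ε / (2 * (Real.sqrt (A * B) + 1)) := by
        rw [← dist_eq_norm]; exact le_of_lt hzd
      calc ‖(∑ j ∈ t, T j) (v - z)‖
          ≤ Real.sqrt (A * B) * (ε / (2 * (Real.sqrt (A * B) + 1))) :=
            h1.trans (mul_le_mul_of_nonneg_left h2 (Real.sqrt_nonneg _))
        _ ≤ ε / 2 := by
            rw [mul_comm, div_mul_eq_mul_div, div_le_div_iff₀ hden (by norm_num : (0:ℝ) < 2)]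
            nlinarith [Real.sqrt_nonneg (A * B), hε.le]
    calc ‖∑ j ∈ t, T j v‖ ≤ ‖(∑ j ∈ t, T j) (v - z)‖ + ‖∑ j ∈ t, T j z‖ := by
          rw [hsplit]; exact norm_add_le _ _
      _ < ε / 2 + ε / 2 := add_lt_add_of_le_of_lt hterm1 (hs t ht)
      _ = ε := by ring
  have htsum_le : ∀ u : H, ‖∑' j, T j u‖ ≤ Real.sqrt (A * B) * ‖u‖ := by
    intro u
    have hts : Filter.Tendsto (fun F : Finset ℕ => ‖∑ j ∈ F, T j u‖)
        Filter.atTop (nhds ‖∑' j, T j u‖) := (hsum u).hasSum.norm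
    refine le_of_tendsto hts (Filter.Eventually.of_forall fun F => ?_)
    have h1 : ∑ j ∈ F, T j u = (∑ j ∈ F, T j) u := by
      simp [ContinuousLinearMap.sum_apply]
    rw [h1]
    exact ((∑ j ∈ F, T j).le_opNorm u).trans
      (mul_le_mul_of_nonneg_right (hFS F) (norm_nonneg u))
  let Slin : H →ₗ[ℂ] H :=
    { toFun := fun u => ∑' j, T j u
      map_add' := fun u v => by
        simp only [map_add]
        exact Summable.tsum_add (hsum u) (hsum v)
      map_smul' := fun a u => by
        simp only [map_smul, RingHom.id_apply]
        exact ((hsum u).hasSum.const_smul a).tsum_eq }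
  refine ⟨Slin.mkContinuous (Real.sqrt (A * B)) htsum_le, fun u => ?_, ?_⟩
  · simpa [Slin] using (hsum u).hasSum
  · exact Slin.mkContinuous_norm_le (Real.sqrt_nonneg _) htsum_le
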